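/- Let M be an m × n real matrix with rank(M) = r, and suppose I ⊆ {1,…,m} and J ⊆ {1,…,n} are index sets of cardinality r such that the r × r submatrix M(I,J) is invertible. Then M admits the skeleton (cross) decomposition M = M(:,J) · M(I,J)⁻¹ · M(I,:), where M(:,J) is the m × r matrix of the columns of M indexed by J and M(I,:) is the r × n matrix of the rows of M indexed by I. In particular, a rank-r matrix is completely recovered from r of its columns and r of its rows containing an invertible r × r intersection. -/

import Mathlib

open Matrix

/-- skeleton (cross) decomposition. If `M` is an `m × n` real matrix of
rank `r`, and `I`, `J` select `r` rows and `r` columns (injective index maps) such that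
the `r × r` submatrix `M(I,J)` is invertible, then
`M = M(:,J) · M(I,J)⁻¹ · M(I,:)`. -/
theorem stmt12 (m n r : ℕ) (M : Matrix (Fin m) (Fin n) ℝ) (hrank : M.rank = r)
    (I : Fin r → Fin m) (J : Fin r → Fin n)
    (hI : Function.Injective I) (hJ : Function.Injective J)
    (hinv : IsUnit (M.submatrix I J)) :
    M = M.submatrix id J * (M.submatrix I J)⁻¹ * M.submatrix I id := by
  set A : Matrix (Fin r) (Fin r) ℝ := M.submatrix I J with hA
  set C : Matrix (Fin m) (Fin r) ℝ := M.submatrix id J with hC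
  have hAdet : IsUnit A.det := (isUnit_iff_isUnit_det A).mp hinv
  -- C = M * P for a selection matrix P
  have hCP : C = M * (1 : Matrix (Fin n) (Fin n) ℝ).submatrix (Equiv.refl (Fin n)) J := by
    rw [mul_submatrix_one]; rfl
  -- A = Q * C
  have hAC : A = (1 : Matrix (Fin m) (Fin m) ℝ).submatrix I (Equiv.refl (Fin m)) * C := by
    rw [one_submatrix_mul, hC, submatrix_submatrix]; rfl
  -- rank bounds
  have hCle : C.rank ≤ r := by
    have h1 : C.rank ≤ M.rank := by rw [hCP]; exact rank_mul_le_left _ _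
    omega
  have hAr : A.rank = r := by
    obtain ⟨u, hu⟩ := hinv
    have := Matrix.rank_unit u
    rw [hu] at this
    simpa using this
  have hAleC : A.rank ≤ C.rank := by
    rw [hAC]; exact rank_mul_le_right _ _
  have hCr : C.rank = r := le_antisymm hCle (by omega)
  -- range of C.mulVecLin ≤ range of M.mulVecLin
  have hle : LinearMap.range C.mulVecLin ≤ LinearMap.range M.mulVecLin := by
    rw [hCP, mulVecLin_mul, LinearMap.range_comp]
    exact LinearMap.map_le_range
  have heq : LinearMap.range C.mulVecLin = LinearMap.range M.mulVecLin := by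
    apply Submodule.eq_of_le_of_finrank_le hle
    show M.rank ≤ C.rank
    rw [hrank, hCr]
  -- each column of M lies in range of C.mulVecLin
  have hcol : ∀ j : Fin n, ∃ x : Fin r → ℝ, C.mulVec x = fun i => M i j := by
    intro j
    have : (fun i => M i j) ∈ LinearMap.range M.mulVecLin := by
      refine ⟨Pi.single j 1, ?_⟩
      ext i
      simp [mulVec, dotProduct, Pi.single_apply]
    rw [← heq] at this
    exact this
  choose X hX using hcol
  set Xm : Matrix (Fin r) (Fin n) ℝ := fun k j => X j k with hXm
  have hMCX : M = C * Xm := by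
    ext i j
    have := congrFun (hX j) i
    simp only [mulVec, dotProduct] at this
    rw [← this]
    simp [Matrix.mul_apply, hXm]
    rfl
  -- rows: M(I,:) = A * Xm
  have hrow : M.submatrix I id = A * Xm := by
    have : M.submatrix I id = (C * Xm).submatrix I id := by rw [← hMCX]
    rw [this]
    ext i j
    simp [Matrix.mul_apply, hA, hC, Matrix.submatrix_apply]
  rw [hrow, Matrix.mul_assoc, ← Matrix.mul_assoc (A⁻¹), Matrix.nonsing_inv_mul A hAdet,
    Matrix.one_mul, ← hMCX]
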